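/- Let 1 ≤ p < ∞ and let E = ⋃_{j∈ℕ} E_j where the E_j are pairwise disjoint measurable subsets of ℝⁿ. Then for every measurable f : ℝⁿ → ℝ one has Σ_j ‖f‖_{L^{p,1}(E_j)}^p ≤ ‖f‖_{L^{p,1}(E)}^p. -/

import Mathlib

open MeasureTheory Set
open scoped ENNReal

/-- The Lorentz `L^{p,1}` norm, `‖f‖_{L^{p,1}} = ∫₀^∞ (L^n {|f| > t})^{1/p} dt`. -/
noncomputable def lorentzNorm {n : ℕ} (p : ℝ) (f : EuclideanSpace ℝ (Fin n) → ℝ) : ℝ≥0∞ :=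
  ∫⁻ t in Set.Ioi (0 : ℝ), (volume {x | t < |f x|}) ^ (1 / p)

/-- Superadditivity of the `p`-th power of the Lorentz `L^{p,1}` norm over a countable
disjoint decomposition. -/
theorem lorentz_pow_superadditive {n : ℕ} (p : ℝ) (hp1 : 1 ≤ p)
    (E : ℕ → Set (EuclideanSpace ℝ (Fin n)))
    (hmeas : ∀ j, MeasurableSet (E j))
    (hdisj : Pairwise (Function.onFun Disjoint E))
    (f : EuclideanSpace ℝ (Fin n) → ℝ) (hf : Measurable f) :
    ∑' j, (lorentzNorm p ((E j).indicator f)) ^ p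
      ≤ (lorentzNorm p ((⋃ j, E j).indicator f)) ^ p := by
  classical
  have hp0 : (0:ℝ) < p := lt_of_lt_of_le one_pos hp1
  set μJ : ℕ → ℝ → ℝ≥0∞ := fun j t => volume {x | t < |(E j).indicator f x|} with hμJ
  set μ : ℝ → ℝ≥0∞ := fun t => volume {x | t < |(⋃ j, E j).indicator f x|} with hμ
  -- superlevel sets of indicators
  have hset : ∀ (A : Set (EuclideanSpace ℝ (Fin n))) (t : ℝ), 0 < t →
      {x | t < |A.indicator f x|} = A ∩ {x | t < |f x|} := by
    intro A t ht
    ext x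
    by_cases hx : x ∈ A
    · simp [Set.indicator_of_mem hx, hx]
    · simp [Set.indicator_of_notMem hx, hx, abs_zero, not_lt.mpr ht.le]
  have hkey : ∀ t : ℝ, 0 < t → μ t = ∑' j, μJ j t := by
    intro t ht
    have h1 : μ t = volume (⋃ j, E j ∩ {x | t < |f x|}) := by
      rw [hμ]
      simp only [hset _ t ht, Set.iUnion_inter]
    rw [h1, measure_iUnion
      (fun i j hij => Disjoint.mono inter_subset_left inter_subset_left (hdisj hij))
      (fun j => (hmeas j).inter (measurableSet_lt measurable_const hf.abs))]
    exact tsum_congr fun j => by rw [hμJ]; simp only [hset _ t ht]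
  -- measurability
  have hantiJ : ∀ j, Measurable (μJ j) :=
    fun j => Antitone.measurable (fun a b hab =>
      measure_mono (fun x hx => lt_of_le_of_lt hab hx))
  have hmeasJ : ∀ j, Measurable (fun t => μJ j t ^ (1/p)) :=
    fun j => ENNReal.continuous_rpow_const.measurable.comp (hantiJ j)
  set I : ℝ≥0∞ := ∫⁻ t in Set.Ioi (0:ℝ), μ t ^ (1/p) with hI
  have hIeq : lorentzNorm p ((⋃ j, E j).indicator f) = I := rfl
  have haI : ∀ j, lorentzNorm p ((E j).indicator f) ≤ I := by
    intro j
    refine setLIntegral_mono' measurableSet_Ioi (fun t ht => ?_)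
    refine ENNReal.rpow_le_rpow ?_ (by positivity)
    rw [hkey t ht]
    exact ENNReal.le_tsum j
  rw [hIeq, ENNReal.tsum_eq_iSup_sum]
  refine iSup_le fun s => ?_
  by_cases hItop : I = ⊤
  · rw [hItop, ENNReal.top_rpow_of_pos hp0]; exact le_top
  -- p = 1 or p > 1
  rcases eq_or_lt_of_le hp1 with hp | hp
  · -- p = 1
    subst hp
    simp only [ENNReal.rpow_one]
    have : ∑ j ∈ s, lorentzNorm 1 ((E j).indicator f)
        = ∫⁻ t in Set.Ioi (0:ℝ), ∑ j ∈ s, μJ j t ^ (1/(1:ℝ)) := by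
      rw [lintegral_finset_sum _ (fun j _ => hmeasJ j)]
      rfl
    rw [this]
    refine setLIntegral_mono' measurableSet_Ioi (fun t ht => ?_)
    simp only [one_div, inv_one, ENNReal.rpow_one]
    rw [hkey t ht]
    exact ENNReal.sum_le_tsum s
  · -- 1 < p
    have hne : p - 1 ≠ 0 := by linarith
    have hpq : p.HolderConjugate (p / (p - 1)) := Real.HolderConjugate.conjExponent hp
    set q : ℝ := p / (p - 1) with hq
    have hq0 : (0:ℝ) ≤ 1/q := hpq.symm.one_div_pos.le
    have hqp : (p-1) * q = p := by rw [hq]; field_simp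
    have hsum1 : 1/q + 1/p = 1 := by
      rw [one_div, one_div, add_comm]; exact hpq.inv_add_inv_eq_one
    set a : ℕ → ℝ≥0∞ := fun j => lorentzNorm p ((E j).indicator f) with ha
    set S : ℝ≥0∞ := ∑ j ∈ s, a j ^ p with hS
    by_cases hS0 : S = 0
    · rw [hS0]; exact zero_le
    have hafin : ∀ j, a j ≠ ⊤ := fun j => ne_top_of_le_ne_top hItop (haI j)
    have hSfin : S ≠ ⊤ := by
      rw [hS]
      exact (ENNReal.sum_lt_top.mpr (fun j _ =>
        ENNReal.rpow_lt_top_of_nonneg hp0.le (hafin j))).ne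
    have hSq_ne_top : S ^ (1/q) ≠ ⊤ := ENNReal.rpow_ne_top_of_nonneg hq0 hSfin
    -- S ≤ S^(1/q) * I
    have hmain : S ≤ S ^ (1/q) * I := by
      have h2 : ∀ j, a j ^ (p-1) * a j
          = ∫⁻ t in Set.Ioi (0:ℝ), a j ^ (p-1) * μJ j t ^ (1/p) := by
        intro j
        rw [lintegral_const_mul _ (hmeasJ j)]
        rfl
      have h1 : S = ∑ j ∈ s, a j ^ (p-1) * a j := by
        refine Finset.sum_congr rfl fun j _ => ?_
        calc a j ^ p = a j ^ ((p-1) + 1) := by norm_num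
          _ = a j ^ (p-1) * a j ^ (1:ℝ) :=
              ENNReal.rpow_add_of_nonneg _ _ (by linarith) zero_le_one
          _ = a j ^ (p-1) * a j := by rw [ENNReal.rpow_one]
      calc S = ∫⁻ t in Set.Ioi (0:ℝ), ∑ j ∈ s, a j ^ (p-1) * μJ j t ^ (1/p) := by
            rw [h1, lintegral_finset_sum _ (fun j _ => (hmeasJ j).const_mul _)]
            exact Finset.sum_congr rfl fun j _ => h2 j
        _ ≤ ∫⁻ t in Set.Ioi (0:ℝ), S ^ (1/q) * μ t ^ (1/p) := by
            refine setLIntegral_mono' measurableSet_Ioi (fun t ht => ?_)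
            have hHolder := ENNReal.inner_le_Lp_mul_Lq s (fun j => a j ^ (p-1))
              (fun j => μJ j t ^ (1/p)) hpq.symm
            have e1 : ∑ j ∈ s, (a j ^ (p-1)) ^ q = S := by
              rw [hS]
              refine Finset.sum_congr rfl fun j _ => ?_
              rw [← ENNReal.rpow_mul, hqp]
            have e2 : ∑ j ∈ s, (μJ j t ^ (1/p)) ^ p = ∑ j ∈ s, μJ j t := by
              refine Finset.sum_congr rfl fun j _ => ?_
              rw [← ENNReal.rpow_mul, one_div_mul_cancel hp0.ne', ENNReal.rpow_one]
            rw [e1, e2] at hHolder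
            refine hHolder.trans ?_
            refine mul_le_mul_right (ENNReal.rpow_le_rpow ?_ hpq.one_div_pos.le) _
            rw [hkey t ht]
            exact ENNReal.sum_le_tsum s
        _ = S ^ (1/q) * I := lintegral_const_mul' _ _ hSq_ne_top
    -- conclude
    have hsplit : S = S ^ (1/q) * S ^ (1/p) := by
      rw [← ENNReal.rpow_add_of_nonneg _ _ hq0 hpq.one_div_pos.le, hsum1,
        ENNReal.rpow_one]
    have hSq_ne_zero : S ^ (1/q) ≠ 0 := by
      simp only [ne_eq, ENNReal.rpow_eq_zero_iff, not_or]
      exact ⟨fun ⟨h1, _⟩ => hS0 h1, fun ⟨h1, _⟩ => hSfin h1⟩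
    have h : S ^ (1/q) * S ^ (1/p) ≤ S ^ (1/q) * I := hsplit.symm.trans_le hmain
    have hcancel : S ^ (1/p) ≤ I :=
      (ENNReal.mul_le_mul_iff_right hSq_ne_zero hSq_ne_top).mp h
    calc S = (S ^ (1/p)) ^ p := by
          rw [← ENNReal.rpow_mul, one_div_mul_cancel hp0.ne', ENNReal.rpow_one]
      _ ≤ I ^ p := ENNReal.rpow_le_rpow hcancel hp0.le
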